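/- Fix k ∈ ℕ with k ≥ 1, α > 0 with α ≠ 1/k, and ρ ∈ (−1,1), and set ν = 1/k. For parameters s > 0, c ∈ [0,1), ω ≥ 0, ζ ≥ 0, η ≥ 0, set a = s(1−c) + ω², S₀ = 2α/(a(α + ν + |α − ν|)), γ₀ = a²νS₀²/α, I⁰ = s(1−c)(1 − 2s(1−c)νS₀ + a s(1−c) ν S₀²), I¹ = (s(1−c)(1−ν) + ω²)/ν, and define the ridgeless homogeneous-ensemble error E_k(s, c, η, ω, ζ) = (1/k)·((1−ρ²)I⁰ + ρ²I¹ + γ₀ζ² + η²)/(1 − γ₀) + ((k−1)/k)·((1−ρ²)s(1−c)(1 − 2s(1−c)νS₀) − ρ²s(1−c)). If two parameter tuples (s, c, η, ω, ζ) and (s', c', η', ω', ζ') satisfy η²/(s(1−c)) = η'²/(s'(1−c')), ω²/(s(1−c)) = ω'²/(s'(1−c')), and ζ²/(s(1−c)) = ζ'²/(s'(1−c')), then E_k(s, c, η, ω, ζ)/(s(1−c)) = E_k(s', c', η', ω', ζ')/(s'(1−c')). In particular E_k = s(1−c)·ℰ(k, ρ, α, H, W, Z) for a function ℰ of the reduced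 noise-to-signal ratios H = η²/(s(1−c)), W = ω²/(s(1−c)), Z = ζ²/(s(1−c)) alone. -/

import Mathlib

/-- Ridgeless generalization error of a homogeneous ensemble of `k` linear regressors on
equicorrelated data, each subsampling a mutually exclusive fraction `ν = 1/k` of the
features (total number of weights conserved). -/
noncomputable def homEnsErr (k : ℕ) (α ρ s c ω ζ η : ℝ) : ℝ :=
  let ν : ℝ := 1 / (k : ℝ)
  let a : ℝ := s * (1 - c) + ω ^ 2
  let S0 : ℝ := 2 * α / (a * (α + ν + |α - ν|))
  let γ0 : ℝ := a ^ 2 * ν * S0 ^ 2 / α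
  let I0 : ℝ := s * (1 - c) * (1 - 2 * s * (1 - c) * ν * S0 + a * s * (1 - c) * ν * S0 ^ 2)
  let I1 : ℝ := (s * (1 - c) * (1 - ν) + ω ^ 2) / ν
  (1 / (k : ℝ)) * (((1 - ρ ^ 2) * I0 + ρ ^ 2 * I1 + γ0 * ζ ^ 2 + η ^ 2) / (1 - γ0)) +
    (((k : ℝ) - 1) / (k : ℝ)) *
      ((1 - ρ ^ 2) * s * (1 - c) * (1 - 2 * s * (1 - c) * ν * S0) - ρ ^ 2 * s * (1 - c))

noncomputable def redErr (k : ℕ) (α ρ W Z H : ℝ) : ℝ :=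
  let ν : ℝ := 1 / (k : ℝ)
  let a : ℝ := 1 + W
  let S0 : ℝ := 2 * α / (a * (α + ν + |α - ν|))
  let γ0 : ℝ := a ^ 2 * ν * S0 ^ 2 / α
  let I0 : ℝ := 1 - 2 * ν * S0 + a * ν * S0 ^ 2
  let I1 : ℝ := ((1 - ν) + W) / ν
  (1 / (k : ℝ)) * (((1 - ρ ^ 2) * I0 + ρ ^ 2 * I1 + γ0 * Z + H) / (1 - γ0)) +
    (((k : ℝ) - 1) / (k : ℝ)) * ((1 - ρ ^ 2) * (1 - 2 * ν * S0) - ρ ^ 2)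

set_option maxHeartbeats 1000000 in
lemma key3 (k : ℕ) (hk : 1 ≤ k) (α ρ s c ω ζ η : ℝ) (hα : 0 < α)
    (hαν : α ≠ 1 / (k : ℝ)) (hb : 0 < s * (1 - c)) :
    homEnsErr k α ρ s c ω ζ η =
      (s * (1 - c)) * redErr k α ρ (ω ^ 2 / (s * (1 - c))) (ζ ^ 2 / (s * (1 - c)))
        (η ^ 2 / (s * (1 - c))) := by
  have hk0 : (0:ℝ) < (k:ℝ) := by exact_mod_cast Nat.pos_of_ne_zero (by omega)
  set ν : ℝ := 1 / (k : ℝ) with hν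
  have hν0 : 0 < ν := by positivity
  set b : ℝ := s * (1 - c) with hbdef
  have hb0 : b ≠ 0 := ne_of_gt hb
  set W : ℝ := ω ^ 2 / b with hWdef
  set Z : ℝ := ζ ^ 2 / b with hZdef
  set H : ℝ := η ^ 2 / b with hHdef
  have hW0 : 0 ≤ W := by positivity
  have hω2 : ω ^ 2 = W * b := by rw [hWdef]; field_simp
  have hζ2 : ζ ^ 2 = Z * b := by rw [hZdef]; field_simp
  have hη2 : η ^ 2 = H * b := by rw [hHdef]; field_simp
  set d : ℝ := α + ν + |α - ν| with hddef
  have hd0 : 0 < d := by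
    have := abs_nonneg (α - ν); rw [hddef]; linarith
  have haW : (0:ℝ) < 1 + W := by linarith
  have hγval : (1 + W) ^ 2 * ν * (2 * α / ((1 + W) * d)) ^ 2 / α = 4 * α * ν / d ^ 2 := by
    field_simp; ring
  have hγlt : 4 * α * ν / d ^ 2 < 1 := by
    rcases lt_or_gt_of_ne hαν with h | h
    · have habs : |α - ν| = ν - α := by rw [abs_of_neg (by linarith)]; ring
      rw [hddef, habs]
      have hdd : α + ν + (ν - α) = 2 * ν := by ring
      rw [hdd, div_lt_one (by positivity)]
      nlinarith
    · have habs : |α - ν| = α - ν := by rw [abs_of_pos (by linarith)]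
      rw [hddef, habs]
      have hdd : α + ν + (α - ν) = 2 * α := by ring
      rw [hdd, div_lt_one (by positivity)]
      nlinarith
  have hD : 1 - 4 * α * ν / d ^ 2 ≠ 0 := by linarith
  clear_value ν b W Z H d
  simp only [homEnsErr, redErr, ← hν, ← hbdef, ← hddef, hω2, hζ2, hη2]
  have h3 : ∀ x : ℝ, x * s * (1 - c) = x * b := fun x => by rw [hbdef]; ring
  simp only [h3]
  have ha : b + W * b = b * (1 + W) := by ring
  rw [ha]
  have hγL : (b * (1 + W)) ^ 2 * ν * (2 * α / (b * (1 + W) * d)) ^ 2 / α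
      = 4 * α * ν / d ^ 2 := by field_simp; ring
  rw [hγL, hγval]
  have hS : 2 * α / (b * (1 + W) * d) = 2 * α / ((1 + W) * d) / b := by
    rw [div_div]; congr 1; ring
  rw [hS]
  generalize 2 * α / ((1 + W) * d) = u
  have e1 : 2 * b * ν * (u / b) = 2 * ν * u := by field_simp
  have e2 : b * (1 + W) * b * ν * (u / b) ^ 2 = (1 + W) * ν * u ^ 2 := by
    field_simp
  rw [e1, e2]
  have hN : (1 - ρ ^ 2) * (b * (1 - 2 * ν * u + (1 + W) * ν * u ^ 2)) +
        ρ ^ 2 * ((b * (1 - ν) + W * b) / ν) + 4 * α * ν / d ^ 2 * (Z * b) + H * b =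
      b * ((1 - ρ ^ 2) * (1 - 2 * ν * u + (1 + W) * ν * u ^ 2) +
        ρ ^ 2 * ((1 - ν + W) / ν) + 4 * α * ν / d ^ 2 * Z + H) := by
    field_simp
  rw [hN, mul_div_assoc]
  ring

/-- Scale invariance of the ridgeless homogeneous-ensemble error: if two parameter tuples
have the same reduced noise-to-signal ratios `H = η²/(s(1−c))`, `W = ω²/(s(1−c))`,
`Z = ζ²/(s(1−c))`, then the reduced errors `E_k/(s(1−c))` coincide; hence
`E_k = s(1−c)·ℰ(k, ρ, α, H, W, Z)`. -/
theorem stmt_17 (k : ℕ) (hk : 1 ≤ k) (α ρ : ℝ) (hα : 0 < α) (hαν : α ≠ 1 / (k : ℝ))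
    (hρ : ρ ∈ Set.Ioo (-1 : ℝ) 1)
    (s c ω ζ η s' c' ω' ζ' η' : ℝ)
    (hs : 0 < s) (hc : c ∈ Set.Ico (0 : ℝ) 1) (hω : 0 ≤ ω) (hζ : 0 ≤ ζ) (hη : 0 ≤ η)
    (hs' : 0 < s') (hc' : c' ∈ Set.Ico (0 : ℝ) 1) (hω' : 0 ≤ ω') (hζ' : 0 ≤ ζ')
    (hη' : 0 ≤ η')
    (hH : η ^ 2 / (s * (1 - c)) = η' ^ 2 / (s' * (1 - c')))
    (hW : ω ^ 2 / (s * (1 - c)) = ω' ^ 2 / (s' * (1 - c')))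
    (hZ : ζ ^ 2 / (s * (1 - c)) = ζ' ^ 2 / (s' * (1 - c'))) :
    homEnsErr k α ρ s c ω ζ η / (s * (1 - c)) =
      homEnsErr k α ρ s' c' ω' ζ' η' / (s' * (1 - c')) := by
  have hb : 0 < s * (1 - c) := mul_pos hs (by linarith [hc.2])
  have hb' : 0 < s' * (1 - c') := mul_pos hs' (by linarith [hc'.2])
  rw [key3 k hk α ρ s c ω ζ η hα hαν hb, key3 k hk α ρ s' c' ω' ζ' η' hα hαν hb',
    mul_div_cancel_left₀ _ (ne_of_gt hb), mul_div_cancel_left₀ _ (ne_of_gt hb'),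
    hH, hW, hZ]
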